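/- arXiv:1612.06563 — 9 statements merged into one kernel-verified Lean document; each statement's English description precedes it below -/
import Mathlib

section
/- For every nonnegative integer m, one has the identity of formal power series D^m f(t) = ∑_{i=0}^{m+1} f_{m,i}(t)·h(t)^i in ℚ⟦t⟧. -/
open Polynomial PowerSeries

/-- The polynomials `f_{m,i}(t)` defined recursively. -/
noncomputable def fmi : ℕ → ℕ → Polynomial ℚ
  | 0, 0 => Polynomial.C (1/2) * Polynomial.X - 1
  | 0, 1 => 1
  | 0, _ + 2 => 0
  | m + 1, 0 => Polynomial.X * Polynomial.derivative (fmi m 0)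
  | m + 1, i + 1 =>
    if i = m + 1 then -((m : ℚ) + 1) • fmi m (m + 1)
    else if i + 1 ≤ m + 1 then
      Polynomial.X * Polynomial.derivative (fmi m (i + 1))
        + Polynomial.C ((i : ℚ) + 1) * (1 - Polynomial.X) * fmi m (i + 1)
        - Polynomial.C (i : ℚ) * fmi m i
    else 0

/-- The polynomials `g_{m,i}(t)` defined recursively. -/
noncomputable def gmi : ℕ → ℕ → Polynomial ℚ
  | m, i =>
    if i = m + 1 then Polynomial.C ((-1 : ℚ) ^ m / m.factorial)
    else if h : 1 ≤ i ∧ i ≤ m then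
      Polynomial.C ((-1 : ℚ) ^ (m + 1) / m.factorial) *
        ∑ j ∈ (Finset.Icc i m).attach, fmi m j.1 * gmi (j.1 - 1) i
    else 0
  termination_by m i => m
  decreasing_by
    have hj := Finset.mem_Icc.mp j.2
    omega

/-- The Bernoulli generating series `h(t) = t/(e^t - 1)`. -/
noncomputable def hps : PowerSeries ℚ := bernoulliPowerSeries ℚ

/-- `f(t) = h(t) - 1 + t/2`. -/
noncomputable def fps : PowerSeries ℚ :=
  hps - 1 + PowerSeries.C (R := ℚ) (1/2) * PowerSeries.X

/-- `g(t) = h(t) + t/2`. -/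
noncomputable def gps : PowerSeries ℚ :=
  hps + PowerSeries.C (R := ℚ) (1/2) * PowerSeries.X

/-- The derivation `D = t·(d/dt)` on `ℚ⟦t⟧`. -/
noncomputable def Dop (φ : PowerSeries ℚ) : PowerSeries ℚ :=
  PowerSeries.X * φ.derivativeFun


section Aux

lemma deriv_exp' : (PowerSeries.exp ℚ).derivativeFun = PowerSeries.exp ℚ := by
  show PowerSeries.derivative ℚ (PowerSeries.exp ℚ) = PowerSeries.exp ℚ
  ext n
  simp [PowerSeries.coeff_derivativeFun, PowerSeries.exp, Nat.factorial_succ]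
  field_simp

lemma deriv_X' : (PowerSeries.X : PowerSeries ℚ).derivativeFun = 1 := by
  show PowerSeries.derivative ℚ PowerSeries.X = 1
  exact PowerSeries.derivative_X

lemma exp_sub_one_ne : PowerSeries.exp ℚ - 1 ≠ 0 := by
  intro h
  have := congrArg (PowerSeries.coeff 1) h
  simp [PowerSeries.exp] at this

lemma Dop_hps : Dop hps = (1 - PowerSeries.X) * hps - hps ^ 2 := by
  set E := PowerSeries.exp ℚ
  have h1 : hps * (E - 1) = PowerSeries.X := bernoulliPowerSeries_mul_exp_sub_one ℚ
  have h2 : hps.derivativeFun * (E - 1) + hps * E = 1 := by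
    have := congrArg PowerSeries.derivativeFun h1
    rw [PowerSeries.derivativeFun_mul, deriv_X'] at this
    have hE : (E - 1).derivativeFun = E := by
      rw [show E - 1 = E + (-1 : PowerSeries ℚ) by ring, PowerSeries.derivativeFun_add]
      rw [show (-1 : PowerSeries ℚ) = PowerSeries.C (-1) by simp, (show (PowerSeries.C (-1 : ℚ)).derivativeFun = 0 from PowerSeries.derivative_C),
        deriv_exp', add_zero]
    rw [hE, smul_eq_mul, smul_eq_mul] at this
    linear_combination this
  apply mul_right_cancel₀ exp_sub_one_ne
  show PowerSeries.X * hps.derivativeFun * (E - 1) = _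
  linear_combination (hps - 1) * h1 + PowerSeries.X * h2

lemma Dop_mul (a b : PowerSeries ℚ) : Dop (a * b) = Dop a * b + a * Dop b := by
  unfold Dop
  rw [PowerSeries.derivativeFun_mul, smul_eq_mul, smul_eq_mul]
  ring

lemma Dop_sum {α : Type*} (s : Finset α) (f : α → PowerSeries ℚ) :
    Dop (∑ i ∈ s, f i) = ∑ i ∈ s, Dop (f i) := by
  unfold Dop
  rw [show (∑ i ∈ s, f i).derivativeFun = PowerSeries.derivative ℚ (∑ i ∈ s, f i) from rfl,
    map_sum, Finset.mul_sum]
  rfl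

lemma Dop_coe (p : Polynomial ℚ) :
    Dop (p : PowerSeries ℚ)
      = ((Polynomial.X * Polynomial.derivative p : Polynomial ℚ) : PowerSeries ℚ) := by
  unfold Dop
  rw [show (p : PowerSeries ℚ).derivativeFun = PowerSeries.derivative ℚ p from rfl,
    PowerSeries.derivativeFun_coe, Polynomial.coe_mul, Polynomial.coe_X]

lemma Dop_pow (n : ℕ) :
    Dop (hps ^ (n + 1)) = PowerSeries.C ((n : ℚ) + 1) * (hps ^ n * Dop hps) := by
  unfold Dop
  rw [show (hps ^ (n+1)).derivativeFun = PowerSeries.derivative ℚ (hps ^ (n+1)) from rfl,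
    Derivation.leibniz_pow]
  simp only [Nat.add_sub_cancel, smul_smul, smul_eq_mul]
  push_cast
  rw [show PowerSeries.derivative ℚ hps = hps.derivativeFun from rfl]
  rw [nsmul_eq_mul, PowerSeries.C_eq_algebraMap, map_add, map_one]
  push_cast
  ring

lemma fmi_eq_zero : ∀ m i : ℕ, m + 1 < i → fmi m i = 0 := by
  intro m
  induction m with
  | zero =>
    intro i hi
    match i, hi with
    | (k + 2), _ => rfl
  | succ m ih =>
    intro i hi
    match i, hi with
    | (j + 1), hi =>
      rw [fmi]
      rw [if_neg (by omega), if_neg (by omega)]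

lemma fmi_succ (m i : ℕ) :
    fmi (m + 1) (i + 1)
      = Polynomial.X * Polynomial.derivative (fmi m (i + 1))
        + Polynomial.C ((i : ℚ) + 1) * (1 - Polynomial.X) * fmi m (i + 1)
        - Polynomial.C (i : ℚ) * fmi m i := by
  rcases lt_trichotomy i (m + 1) with h | h | h
  · rw [fmi, if_neg (by omega), if_pos (by omega)]
  · subst h
    rw [fmi, if_pos rfl, fmi_eq_zero m (m + 2) (by omega)]
    push_cast
    rw [Polynomial.smul_eq_C_mul]
    simp
    ring
  · rw [fmi, if_neg (by omega), if_neg (by omega),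
      fmi_eq_zero m (i + 1) (by omega), fmi_eq_zero m i (by omega)]
    simp

/-- The single-term Leibniz computation. -/
lemma Dop_term (p : Polynomial ℚ) (i : ℕ) :
    Dop ((p : PowerSeries ℚ) * hps ^ (i + 1))
      = ((Polynomial.X * Polynomial.derivative p : Polynomial ℚ) : PowerSeries ℚ) * hps ^ (i + 1)
        + ((Polynomial.C ((i : ℚ) + 1) * (1 - Polynomial.X) * p : Polynomial ℚ) : PowerSeries ℚ)
            * hps ^ (i + 1)
        - ((Polynomial.C ((i : ℚ) + 1) * p : Polynomial ℚ) : PowerSeries ℚ) * hps ^ (i + 2) := by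
  rw [Dop_mul, Dop_coe, Dop_pow, Dop_hps]
  simp only [Polynomial.coe_mul, Polynomial.coe_C, Polynomial.coe_X, Polynomial.coe_sub,
    Polynomial.coe_one]
  ring

lemma sum_shift (F G K : ℕ → PowerSeries ℚ) (n : ℕ) (hF : F n = 0) (hG : G n = 0)
    (hK : K 0 = 0) :
    ∑ i ∈ Finset.range n, (F i + G i - K (i + 1))
      = ∑ i ∈ Finset.range (n + 1), (F i + G i - K i) := by
  rw [Finset.sum_sub_distrib, Finset.sum_add_distrib, Finset.sum_sub_distrib,
    Finset.sum_add_distrib, Finset.sum_range_succ F, Finset.sum_range_succ G, hF, hG,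
    add_zero, add_zero, Finset.sum_range_succ' K, hK, add_zero]

end Aux

theorem Dpow_f_eq_sum_fmi_mul_h_pow (m : ℕ) :
    Dop^[m] fps = ∑ i ∈ Finset.range (m + 2), (fmi m i : PowerSeries ℚ) * hps ^ i := by
  induction m with
  | zero =>
    simp only [Function.iterate_zero, id_eq]
    rw [Finset.sum_range_succ, Finset.sum_range_succ, Finset.sum_range_zero]
    rw [show fmi 0 0 = Polynomial.C (1/2) * Polynomial.X - 1 from rfl,
      show fmi 0 1 = (1 : Polynomial ℚ) from rfl]
    simp only [fps, Polynomial.coe_sub, Polynomial.coe_mul, Polynomial.coe_C,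
      Polynomial.coe_X, Polynomial.coe_one, pow_zero, pow_one, mul_one, one_mul]
    ring
  | succ m ih =>
    rw [Function.iterate_succ_apply', ih, Dop_sum]
    have hP2 : fmi m (m + 2) = 0 := fmi_eq_zero m (m + 2) (by omega)
    rw [Finset.sum_range_succ' _ (m + 1),
      show m + 1 + 2 = (m + 2) + 1 from rfl, Finset.sum_range_succ' _ (m + 2)]
    have h0 : Dop ((fmi m 0 : PowerSeries ℚ) * hps ^ 0)
        = (fmi (m + 1) 0 : PowerSeries ℚ) * hps ^ 0 := by
      rw [pow_zero, mul_one, mul_one, Dop_coe,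
        show fmi (m + 1) 0 = Polynomial.X * Polynomial.derivative (fmi m 0) from rfl]
    rw [h0]
    congr 1
    calc ∑ i ∈ Finset.range (m + 1), Dop ((fmi m (i + 1) : PowerSeries ℚ) * hps ^ (i + 1))
        = ∑ i ∈ Finset.range (m + 1),
            (((Polynomial.X * Polynomial.derivative (fmi m (i + 1)) : Polynomial ℚ) :
                PowerSeries ℚ) * hps ^ (i + 1)
              + ((Polynomial.C ((i : ℚ) + 1) * (1 - Polynomial.X) * fmi m (i + 1) :
                  Polynomial ℚ) : PowerSeries ℚ) * hps ^ (i + 1)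
              - ((Polynomial.C (((i + 1 : ℕ) : ℚ)) * fmi m (i + 1) : Polynomial ℚ) :
                  PowerSeries ℚ) * hps ^ (i + 1 + 1)) := by
          refine Finset.sum_congr rfl fun i _ => ?_
          rw [Dop_term]
          norm_cast
      _ = ∑ i ∈ Finset.range (m + 2),
            (((Polynomial.X * Polynomial.derivative (fmi m (i + 1)) : Polynomial ℚ) :
                PowerSeries ℚ) * hps ^ (i + 1)
              + ((Polynomial.C ((i : ℚ) + 1) * (1 - Polynomial.X) * fmi m (i + 1) :
                  Polynomial ℚ) : PowerSeries ℚ) * hps ^ (i + 1)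
              - ((Polynomial.C ((i : ℕ) : ℚ) * fmi m i : Polynomial ℚ) :
                  PowerSeries ℚ) * hps ^ (i + 1)) := by
          refine sum_shift _ _
            (fun j => ((Polynomial.C ((j : ℕ) : ℚ) * fmi m j : Polynomial ℚ) :
              PowerSeries ℚ) * hps ^ (j + 1)) (m + 1) ?_ ?_ ?_
          · simp [hP2]
          · simp [hP2]
          · simp
      _ = ∑ i ∈ Finset.range (m + 2), (fmi (m + 1) (i + 1) : PowerSeries ℚ) * hps ^ (i + 1) := by
          refine Finset.sum_congr rfl fun i _ => ?_
          rw [fmi_succ]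
          push_cast [Polynomial.coe_sub, Polynomial.coe_add, Polynomial.coe_mul,
            Polynomial.coe_C, Polynomial.coe_X, Polynomial.coe_one]
          ring
end

section
/- For every nonnegative integer m: f_{m,0}(t) = t/2 − δ_{m,0}, f_{m,m+1}(t) is the constant polynomial (−1)^m·m!, and for every integer i with 1 ≤ i ≤ m+1 the polynomial f_{m,i}(t) has integer coefficients. -/
open Polynomial PowerSeries

lemma fmi_zero (m : ℕ) :
    fmi m 0 = Polynomial.C (1/2 : ℚ) * Polynomial.X - (if m = 0 then 1 else 0) := by
  induction m with
  | zero => simp [fmi]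
  | succ n ih =>
      rw [show fmi (n+1) 0 = Polynomial.X * Polynomial.derivative (fmi n 0) from rfl, ih]
      rcases eq_or_ne n 0 with h | h <;> simp [h]

lemma fmi_top (m : ℕ) :
    fmi m (m + 1) = Polynomial.C ((-1 : ℚ) ^ m * m.factorial) := by
  induction m with
  | zero => simp [fmi]
  | succ n ih =>
      rw [show fmi (n+1) (n+2) = -((n : ℚ) + 1) • fmi n (n + 1) by simp [fmi], ih]
      rw [Polynomial.smul_C]
      congr 1
      rw [smul_eq_mul]
      push_cast [Nat.factorial_succ, pow_succ]
      ring

lemma fmi_int (m : ℕ) : ∀ i : ℕ, 1 ≤ i → i ≤ m + 1 →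
    ∃ q : Polynomial ℤ, fmi m i = q.map (Int.castRingHom ℚ) := by
  induction m with
  | zero =>
      intro i h1 h2
      interval_cases i
      exact ⟨1, by simp [fmi]⟩
  | succ n ih =>
      intro i h1 h2
      obtain ⟨j, rfl⟩ := Nat.exists_eq_add_of_le' h1
      by_cases hj : j = n + 1
      · subst hj
        refine ⟨Polynomial.C ((-1)^(n+1) * (n+1).factorial), ?_⟩
        rw [fmi_top, Polynomial.map_C]
        congr 1
        simp
      · have hle : j + 1 ≤ n + 1 := by omega
        rw [show fmi (n+1) (j+1) =
          Polynomial.X * Polynomial.derivative (fmi n (j+1))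
            + Polynomial.C ((j : ℚ) + 1) * (1 - Polynomial.X) * fmi n (j+1)
            - Polynomial.C (j : ℚ) * fmi n j by
          simp [fmi, hj, hle]]
        obtain ⟨q1, hq1⟩ := ih (j+1) (by omega) (by omega)
        rcases Nat.eq_zero_or_pos j with hj0 | hj0
        · subst hj0
          refine ⟨Polynomial.X * Polynomial.derivative q1
            + Polynomial.C 1 * (1 - Polynomial.X) * q1, ?_⟩
          simp [hq1, Polynomial.derivative_map, Polynomial.map_mul, Polynomial.map_sub,
            Polynomial.map_add]
        · obtain ⟨q0, hq0⟩ := ih j hj0 (by omega)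
          refine ⟨Polynomial.X * Polynomial.derivative q1
            + Polynomial.C ((j : ℤ) + 1) * (1 - Polynomial.X) * q1
            - Polynomial.C (j : ℤ) * q0, ?_⟩
          simp only [hq1, hq0, Polynomial.derivative_map, Polynomial.map_mul,
            Polynomial.map_sub, Polynomial.map_add, Polynomial.map_C, Polynomial.map_X,
            Polynomial.map_one, Int.cast_add, Int.cast_natCast, Int.cast_one,
            eq_intCast, Int.cast_ofNat, Polynomial.map_intCast, map_add, Polynomial.C_1, Polynomial.map_natCast, Polynomial.C_eq_natCast]

theorem fmi_basic (m : ℕ) :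
    fmi m 0 = Polynomial.C (1/2 : ℚ) * Polynomial.X - (if m = 0 then 1 else 0) ∧
    fmi m (m + 1) = Polynomial.C ((-1 : ℚ) ^ m * m.factorial) ∧
    ∀ i : ℕ, 1 ≤ i → i ≤ m + 1 →
      ∃ q : Polynomial ℤ, fmi m i = q.map (Int.castRingHom ℚ) := by
  exact ⟨fmi_zero m, fmi_top m, fmi_int m⟩
end

section
/- For any integers m, i with 1 ≤ i ≤ m+1, the polynomial f_{m,i}(t) has degree exactly m+1−i, and its leading coefficient c_{m,i} satisfies (−1)^m·c_{m,i} > 0. -/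
open Polynomial PowerSeries

theorem fmi_degree_leadingCoeff (m i : ℕ) (h1 : 1 ≤ i) (h2 : i ≤ m + 1) :
    (fmi m i).degree = (m + 1 - i : ℕ) ∧
    (-1 : ℚ) ^ m * (fmi m i).leadingCoeff > 0 := by
  induction m generalizing i with
  | zero =>
    interval_cases i
    · refine ⟨?_, ?_⟩
      · simp [fmi]
      · simp [fmi]
  | succ m ih =>
    obtain ⟨j, rfl⟩ : ∃ j, i = j + 1 := ⟨i - 1, by omega⟩
    by_cases hjm : j = m + 1
    · -- top case
      subst hjm
      have hF : fmi (m+1) (m+1+1) = -((m : ℚ) + 1) • fmi m (m + 1) := by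
        rw [fmi, if_pos rfl]
      obtain ⟨hdeg, hlc⟩ := ih (m+1) (by omega) (by omega)
      have hd0 : (m + 1 - (m+1) : ℕ) = 0 := by omega
      rw [hd0] at hdeg
      have hne : (-((m : ℚ) + 1)) ≠ 0 := by
        have : (0:ℚ) < (m:ℚ) + 1 := by positivity
        linarith
      constructor
      · rw [hF, Polynomial.smul_eq_C_mul, Polynomial.degree_mul, Polynomial.degree_C hne, hdeg]
        simp
      · rw [hF, Polynomial.smul_eq_C_mul, Polynomial.leadingCoeff_mul, Polynomial.leadingCoeff_C, pow_succ]
        have hm1 : (0:ℚ) < (m:ℚ) + 1 := by positivity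
        nlinarith [hlc]
    · -- main case : j ≤ m
      have hjle : j ≤ m := by omega
      have hF : fmi (m+1) (j+1) =
          Polynomial.X * derivative (fmi m (j+1))
            + Polynomial.C ((j : ℚ) + 1) * (1 - Polynomial.X) * fmi m (j+1)
            - Polynomial.C (j : ℚ) * fmi m j := by
        rw [fmi, if_neg hjm, if_pos (by omega)]
      obtain ⟨hpdeg, hplc⟩ := ih (j+1) (by omega) (by omega)
      set p := fmi m (j+1) with hp
      set q := fmi m j with hq
      set d := m - j with hd
      have hdeq : (m + 1 - (j+1) : ℕ) = d := by omega
      rw [hdeq] at hpdeg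
      have hpne : p ≠ 0 := by
        intro h; rw [h, degree_zero] at hpdeg; exact absurd hpdeg (by simp)
      have hpnat : p.natDegree = d := Polynomial.natDegree_eq_of_degree_eq_some hpdeg
      have hplc' : p.leadingCoeff = p.coeff d := by rw [leadingCoeff, hpnat]
      have hmid : Polynomial.C ((j : ℚ) + 1) * (1 - Polynomial.X) * p = Polynomial.C ((j : ℚ) + 1) * (p - Polynomial.X * p) := by
        rw [mul_assoc, one_sub_mul]
      -- coefficient at d+1
      have hcoeff : (fmi (m+1) (j+1)).coeff (d+1) =
          -((j : ℚ) + 1) * p.coeff d - (j : ℚ) * q.coeff (d+1) := by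
        rw [hF, hmid, Polynomial.coeff_sub, Polynomial.coeff_add, Polynomial.coeff_C_mul, Polynomial.coeff_C_mul, Polynomial.coeff_sub,
          Polynomial.coeff_X_mul, Polynomial.coeff_X_mul, Polynomial.coeff_derivative,
          Polynomial.coeff_eq_zero_of_degree_lt (by rw [hpdeg]; exact_mod_cast Nat.lt_succ_self d)]
        ring
      -- degree bounds
      have hb1 : (Polynomial.X * derivative p).degree ≤ ((d+1 : ℕ) : WithBot ℕ) := by
        refine le_trans (Polynomial.degree_mul_le _ _) ?_
        rw [Polynomial.degree_X]
        calc 1 + (derivative p).degree ≤ 1 + p.degree :=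
              add_le_add_right Polynomial.degree_derivative_le 1
          _ = ((d+1 : ℕ) : WithBot ℕ) := by
              rw [hpdeg]; push_cast; rw [add_comm]
      have h1x : (1 - Polynomial.X : Polynomial ℚ).degree = 1 := by
        rw [show (1 - Polynomial.X : Polynomial ℚ) = -(Polynomial.X - Polynomial.C 1) by simp [neg_sub], Polynomial.degree_neg,
          Polynomial.degree_X_sub_C]
      have hb2 : (Polynomial.C ((j : ℚ) + 1) * (1 - Polynomial.X) * p).degree ≤ ((d+1 : ℕ) : WithBot ℕ) := by
        refine le_trans (Polynomial.degree_mul_le _ _) ?_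
        refine le_trans (add_le_add_left (Polynomial.degree_mul_le _ _) _) ?_
        rw [h1x, hpdeg]
        refine le_trans (add_le_add_left (add_le_add_left Polynomial.degree_C_le _) _) ?_
        rw [zero_add]
        push_cast
        rw [add_comm]
      have hb3 : (Polynomial.C (j : ℚ) * q).degree ≤ ((d+1 : ℕ) : WithBot ℕ) := by
        rcases Nat.eq_zero_or_pos j with hj0 | hj0
        · simp [hj0]
        · obtain ⟨hqdeg, -⟩ := ih j hj0 (by omega)
          have hdq : (m + 1 - j : ℕ) = d + 1 := by omega
          rw [hdq] at hqdeg
          refine le_trans (Polynomial.degree_mul_le _ _) ?_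
          rw [hqdeg]
          refine le_trans (add_le_add_left Polynomial.degree_C_le _) ?_
          rw [zero_add]
      have hbound : (fmi (m+1) (j+1)).degree ≤ ((d+1 : ℕ) : WithBot ℕ) := by
        rw [hF]
        exact le_trans (Polynomial.degree_sub_le _ _)
          (max_le (le_trans (Polynomial.degree_add_le _ _) (max_le hb1 hb2)) hb3)
      -- positivity
      have h1 : 0 < (-1:ℚ)^m * p.coeff d := hplc' ▸ hplc
      have hpos : 0 < (-1:ℚ)^(m+1) * (fmi (m+1) (j+1)).coeff (d+1) := by
        rw [hcoeff, pow_succ]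
        rcases Nat.eq_zero_or_pos j with hj0 | hj0
        · subst hj0
          simp only [Nat.cast_zero]
          nlinarith [h1]
        · obtain ⟨hqdeg, hqlc⟩ := ih j hj0 (by omega)
          have hdq : (m + 1 - j : ℕ) = d + 1 := by omega
          rw [hdq] at hqdeg
          have hqnat : q.natDegree = d + 1 := Polynomial.natDegree_eq_of_degree_eq_some hqdeg
          have hqlc' : q.leadingCoeff = q.coeff (d+1) := by rw [leadingCoeff, hqnat]
          have h2 : 0 < (-1:ℚ)^m * q.coeff (d+1) := hqlc' ▸ hqlc
          have hjpos : (0:ℚ) < (j:ℚ) := by exact_mod_cast hj0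
          nlinarith [h1, h2, mul_pos hjpos h1, mul_pos hjpos h2]
      have hcne : (fmi (m+1) (j+1)).coeff (d+1) ≠ 0 := by
        intro h; rw [h, mul_zero] at hpos; exact lt_irrefl 0 hpos
      have hdegF : (fmi (m+1) (j+1)).degree = ((d+1 : ℕ) : WithBot ℕ) :=
        Polynomial.degree_eq_of_le_of_coeff_ne_zero hbound hcne
      have hnatF : (fmi (m+1) (j+1)).natDegree = d + 1 :=
        Polynomial.natDegree_eq_of_degree_eq_some hdegF
      constructor
      · rw [hdegF]
        congr 1
        omega
      · rw [leadingCoeff, hnatF]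
        exact hpos
end

section
/- For every nonnegative integer m, the coefficient of t^m in the polynomial f_{m,1}(t) equals (−1)^m. -/
open Polynomial PowerSeries

lemma fmi_one_succ (m : ℕ) :
    fmi (m + 1) 1 = Polynomial.X * Polynomial.derivative (fmi m 1)
      + (1 - Polynomial.X) * fmi m 1 := by
  show fmi (m + 1) (0 + 1) = _
  rw [fmi]
  simp

lemma fmi_one_aux (m : ℕ) :
    (∀ k, m < k → (fmi m 1).coeff k = 0) ∧ (fmi m 1).coeff m = (-1 : ℚ) ^ m := by
  induction m with
  | zero =>
    constructor
    · intro k hk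
      have : fmi 0 1 = 1 := by rw [fmi]
      rw [this, Polynomial.coeff_one]
      simp [show k ≠ 0 by omega]
    · have : fmi 0 1 = 1 := by rw [fmi]
      simp [this]
  | succ m ih =>
    obtain ⟨h0, h1⟩ := ih
    constructor
    · intro k hk
      obtain ⟨j, rfl⟩ : ∃ j, k = j + 1 := ⟨k - 1, by omega⟩
      rw [fmi_one_succ]
      rw [Polynomial.coeff_add, Polynomial.coeff_X_mul, Polynomial.coeff_derivative,
        sub_mul, one_mul, Polynomial.coeff_sub, Polynomial.coeff_X_mul]
      rw [h0 (j + 1) (by omega), h0 j (by omega)]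
      ring
    · rw [fmi_one_succ]
      rw [Polynomial.coeff_add, Polynomial.coeff_X_mul, Polynomial.coeff_derivative,
        sub_mul, one_mul, Polynomial.coeff_sub, Polynomial.coeff_X_mul]
      rw [h0 (m + 1) (by omega), h1]
      ring

theorem fmi_one_coeff (m : ℕ) : (fmi m 1).coeff m = (-1 : ℚ) ^ m := by
  exact (fmi_one_aux m).2
end

section
/- For every nonnegative integer m, one has the polynomial identity ∑_{i=1}^{m+1} (−1)^{i−1}·f_{m,i}(t)·t^{i−1} = 1 in ℚ[t]. -/
open Polynomial PowerSeries

noncomputable def Tm (m : ℕ) : Polynomial ℚ :=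
  ∑ j ∈ Finset.range (m + 1), ((-1 : ℚ) ^ j) • (fmi m (j + 1) * Polynomial.X ^ j)

lemma Xderiv_mul_pow (f : Polynomial ℚ) (j : ℕ) :
    Polynomial.X * Polynomial.derivative (f * Polynomial.X ^ j)
      = Polynomial.X * Polynomial.derivative f * Polynomial.X ^ j
        + Polynomial.C (j : ℚ) * f * Polynomial.X ^ j := by
  cases j with
  | zero => simp
  | succ j =>
    rw [Polynomial.derivative_mul, Polynomial.derivative_X_pow]
    push_cast
    ring

lemma Tm_succ (m : ℕ) :
    Tm (m + 1) = Polynomial.X * Polynomial.derivative (Tm m) + Tm m := by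
  unfold Tm
  rw [Finset.sum_range_succ, Polynomial.derivative_sum, Finset.mul_sum,
    ← Finset.sum_add_distrib]
  -- rewrite fmi at the last term : index m+1, so fmi (m+2) (m+2)
  have hlast : fmi (m + 1) (m + 1 + 1) = -((m : ℚ) + 1) • fmi m (m + 1) := by
    rw [fmi, if_pos rfl]
  rw [hlast]
  have key : ∀ j ∈ Finset.range (m + 1),
      ((-1 : ℚ) ^ j) • (fmi (m + 1) (j + 1) * Polynomial.X ^ j)
        - (Polynomial.X * Polynomial.derivative (((-1 : ℚ) ^ j) • (fmi m (j + 1) * Polynomial.X ^ j))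
          + ((-1 : ℚ) ^ j) • (fmi m (j + 1) * Polynomial.X ^ j))
      = ((-1 : ℚ) ^ (j+1)) • (Polynomial.C ((j:ℚ)+1) * fmi m (j + 1) * Polynomial.X ^ (j+1))
        - ((-1 : ℚ) ^ j) • (Polynomial.C (j:ℚ) * fmi m j * Polynomial.X ^ j) := by
    intro j hj
    rw [Finset.mem_range] at hj
    have h1 : fmi (m + 1) (j + 1)
        = Polynomial.X * Polynomial.derivative (fmi m (j + 1))
          + Polynomial.C ((j : ℚ) + 1) * (1 - Polynomial.X) * fmi m (j + 1)
          - Polynomial.C (j : ℚ) * fmi m j := by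
      rw [fmi]
      rw [if_neg (by omega), if_pos (by omega)]
    simp only [h1, Polynomial.derivative_smul, Polynomial.smul_eq_C_mul,
      Polynomial.derivative_C_mul, pow_succ, map_mul, map_neg, map_one, map_add, map_natCast]
    have hC : (Polynomial.C (j:ℚ)) = ((j : ℚ[X])) := by simp
    linear_combination (-Polynomial.C ((-1:ℚ)^j)) * Xderiv_mul_pow (fmi m (j+1)) j
      - (Polynomial.C ((-1:ℚ)^j) * Polynomial.X ^ j * fmi m (j+1)) * hC
  set A : ℕ → ℚ[X] := fun j => ((-1:ℚ)^j) • (Polynomial.C (j:ℚ) * fmi m j * Polynomial.X ^ j)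
    with hA
  have tele : ∑ j ∈ Finset.range (m+1), (A (j+1) - A j) = A (m+1) - A 0 :=
    Finset.sum_range_sub A (m+1)
  have h2 : ∑ j ∈ Finset.range (m+1),
      ((-1 : ℚ) ^ j) • (fmi (m + 1) (j + 1) * Polynomial.X ^ j)
      = ∑ j ∈ Finset.range (m+1),
        (Polynomial.X * Polynomial.derivative (((-1 : ℚ) ^ j) • (fmi m (j + 1) * Polynomial.X ^ j))
          + ((-1 : ℚ) ^ j) • (fmi m (j + 1) * Polynomial.X ^ j))
        + (A (m+1) - A 0) := by
    rw [← tele, ← Finset.sum_add_distrib]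
    refine Finset.sum_congr rfl fun j hj => ?_
    have := key j hj
    simp only [hA]
    push_cast
    push_cast at this
    linear_combination this
  rw [h2]
  have hA0 : A 0 = 0 := by simp [hA]
  rw [hA0]
  simp only [hA, Polynomial.smul_eq_C_mul, map_neg]
  push_cast
  ring

theorem sum_fmi_eq_one (m : ℕ) :
    ∑ i ∈ Finset.Icc 1 (m + 1),
      ((-1 : ℚ) ^ (i - 1)) • (fmi m i * Polynomial.X ^ (i - 1)) = 1 := by
  have hT : ∀ n, Tm n = 1 := by
    intro n
    induction n with
    | zero => simp [Tm, fmi]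
    | succ k ih => rw [Tm_succ, ih]; simp
  have := hT m
  unfold Tm at this
  rw [← Finset.Ico_add_one_right_eq_Icc, Finset.sum_Ico_eq_sum_range,
    show m + 1 + 1 - 1 = m + 1 from rfl, ← this]
  refine Finset.sum_congr rfl fun i _ => ?_
  rw [show 1 + i - 1 = i from by omega, show 1 + i = i + 1 from by omega]
end

section
/- For every nonnegative integer m, ∑_{i=1}^{m+1} (−1)^{i−1}·c_{m,i} = δ_{m,0}, where c_{m,i} denotes the coefficient of t^{m+1−i} in f_{m,i}(t) and δ_{m,0} is 1 if m = 0 and 0 otherwise. -/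
open Polynomial PowerSeries

lemma fmi_coeff_eq_zero : ∀ m i n : ℕ, m + 1 < n + i → (fmi m i).coeff n = 0 := by
  intro m
  induction m with
  | zero =>
    intro i n h
    match i with
    | 0 =>
      have hn0 : n ≠ 0 := by omega
      have hn1 : n ≠ 1 := by omega
      simp [fmi, Polynomial.coeff_one, Polynomial.coeff_X, hn0, hn1, Ne.symm hn1]
    | 1 =>
      have hn0 : n ≠ 0 := by omega
      simp [fmi, Polynomial.coeff_one, hn0]
    | (k+2) => simp [fmi]
  | succ m ih =>
    intro i n h
    match i with
    | 0 =>
      match n with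
      | 0 => omega
      | (k+1) =>
        rw [fmi, Polynomial.coeff_X_mul, Polynomial.coeff_derivative,
          ih 0 (k+1) (by omega), zero_mul]
    | (i+1) =>
      rw [fmi]
      split_ifs with h1 h2
      · rw [Polynomial.coeff_smul, ih (m+1) n (by omega), smul_zero]
      · match n with
        | 0 => omega
        | (k+1) =>
          have e1 : Polynomial.C ((i : ℚ) + 1) * (1 - Polynomial.X) * fmi m (i + 1)
              = Polynomial.C ((i : ℚ) + 1) * fmi m (i + 1)
                - Polynomial.C ((i : ℚ) + 1) * (Polynomial.X * fmi m (i + 1)) := by ring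
          rw [Polynomial.coeff_sub, Polynomial.coeff_add, Polynomial.coeff_X_mul,
            Polynomial.coeff_derivative, e1, Polynomial.coeff_sub,
            Polynomial.coeff_C_mul, Polynomial.coeff_C_mul, Polynomial.coeff_C_mul,
            Polynomial.coeff_X_mul,
            ih (i+1) (k+1) (by omega), ih (i+1) k (by omega), ih i (k+1) (by omega)]
          ring
      · simp

lemma fmi_coeff_rec (i k : ℕ) :
    (fmi (i+k+1) (i+1)).coeff (k+1)
      = -((i:ℚ)+1) * (fmi (i+k) (i+1)).coeff k - (i:ℚ) * (fmi (i+k) i).coeff (k+1) := by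
  rw [fmi, if_neg (by omega : ¬ i = i + k + 1), if_pos (by omega : i + 1 ≤ i + k + 1)]
  have e1 : Polynomial.C ((i : ℚ) + 1) * (1 - Polynomial.X) * fmi (i+k) (i + 1)
      = Polynomial.C ((i : ℚ) + 1) * fmi (i+k) (i + 1)
        - Polynomial.C ((i : ℚ) + 1) * (Polynomial.X * fmi (i+k) (i + 1)) := by ring
  rw [Polynomial.coeff_sub, Polynomial.coeff_add, Polynomial.coeff_X_mul,
    Polynomial.coeff_derivative, e1, Polynomial.coeff_sub,
    Polynomial.coeff_C_mul, Polynomial.coeff_C_mul, Polynomial.coeff_C_mul,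
    Polynomial.coeff_X_mul,
    fmi_coeff_eq_zero (i+k) (i+1) (k+1) (by omega)]
  ring

lemma fmi_coeff_top (m : ℕ) :
    (fmi (m+1) (m+1+1)).coeff 0 = -((m:ℚ)+1) * (fmi m (m+1)).coeff 0 := by
  rw [fmi, if_pos rfl, Polynomial.coeff_smul, smul_eq_mul]

theorem sum_cmi_eq_delta (m : ℕ) :
    ∑ i ∈ Finset.Icc 1 (m + 1), (-1 : ℚ) ^ (i - 1) * (fmi m i).coeff (m + 1 - i)
      = if m = 0 then 1 else 0 := by
  match m with
  | 0 =>
    rw [Finset.Icc_self, Finset.sum_singleton]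
    show (-1:ℚ)^0 * (fmi 0 1).coeff 0 = _
    simp [fmi]
  | (m+1) =>
    rw [if_neg (by omega)]
    set T : ℕ → ℚ := fun j => (-1:ℚ)^j * (j:ℚ) * (fmi m j).coeff (m+1-j) with hT
    have key : ∀ j ∈ Finset.range (m+1),
        (-1:ℚ)^((1+j)-1) * (fmi (m+1) (1+j)).coeff (m+1+1-(1+j)) = T (j+1) - T j := by
      intro j hj
      rw [Finset.mem_range] at hj
      obtain ⟨k, rfl⟩ : ∃ k, m = j + k := ⟨m - j, by omega⟩
      have e2 : j + k + 1 + 1 - (1 + j) = k + 1 := by omega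
      have e3 : (1 + j) - 1 = j := by omega
      have e1 : 1 + j = j + 1 := by omega
      rw [e2, e3, e1, fmi_coeff_rec j k, hT]
      simp only
      have e4 : j + k + 1 - (j + 1) = k := by omega
      have e5 : j + k + 1 - j = k + 1 := by omega
      rw [e4, e5]
      push_cast
      ring
    rw [Finset.sum_Icc_succ_top (by omega : 1 ≤ m + 1 + 1),
      ← Finset.Ico_add_one_right_eq_Icc, Finset.sum_Ico_eq_sum_range]
    have e6 : m + 1 + 1 - 1 = m + 1 := by omega
    rw [e6, Finset.sum_congr rfl key, Finset.sum_range_sub T]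
    have e7 : m + 1 + 1 - (m + 1 + 1) = 0 := by omega
    rw [e7, fmi_coeff_top m, hT]
    simp only
    have e9 : m + 1 - (m + 1) = 0 := by omega
    rw [e9]
    push_cast
    ring
end

section
/- For every nonnegative integer m and all integers i, l with 1 ≤ l ≤ i ≤ m+1: the polynomial g_{m,i}(t) has degree at most m+1−i, and ∑_{j=l}^{i} f_{i−1,j}(t)·g_{j−1,l}(t) = δ_{i,l} (equal to 1 if i = l and 0 otherwise); i.e., the lower triangular matrix with (i,j) entry g_{i−1,j}(t) is the inverse of the lower triangular matrix A_m(t) with (i,j) entry f_{i−1,j}(t), 1 ≤ j ≤ i ≤ m+1. -/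
open Polynomial PowerSeries

lemma fmi_deg (m i : ℕ) : (fmi m i).degree ≤ (m + 1 - i : ℕ) := by
  induction m generalizing i with
  | zero =>
      match i with
      | 0 =>
          show ((Polynomial.C (1/2 : ℚ)) * Polynomial.X - 1).degree ≤ ((0 + 1 - 0 : ℕ) : WithBot ℕ)
          rw [show ((0 + 1 - 0 : ℕ) : WithBot ℕ) = 1 by norm_cast]
          compute_degree
      | 1 => show (1 : Polynomial ℚ).degree ≤ (0:ℕ); simp
      | (k + 2) => show (0 : Polynomial ℚ).degree ≤ _; simp
  | succ n ih =>
      match i with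
      | 0 =>
          show (Polynomial.X * Polynomial.derivative (fmi n 0)).degree ≤ ((n+2 : ℕ) : WithBot ℕ)
          calc (Polynomial.X * Polynomial.derivative (fmi n 0)).degree
              ≤ Polynomial.X.degree + (Polynomial.derivative (fmi n 0)).degree :=
                Polynomial.degree_mul_le _ _
            _ ≤ 1 + (fmi n 0).degree := by
                gcongr
                · exact le_of_eq Polynomial.degree_X
                · exact Polynomial.degree_derivative_le
            _ ≤ 1 + ((n + 1 - 0 : ℕ) : WithBot ℕ) := by gcongr; exact ih 0
            _ = ((n + 2 : ℕ) : WithBot ℕ) := by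
                rw [Nat.sub_zero, ← Nat.cast_one (R := WithBot ℕ), ← Nat.cast_add]
                exact Nat.cast_inj.mpr (by omega)
      | (j + 1) =>
          show (fmi (n+1) (j+1)).degree ≤ _
          rw [fmi]
          by_cases hj : j = n + 1
          · rw [if_pos hj]
            subst hj
            refine le_trans (Polynomial.degree_smul_le _ _) ?_
            refine le_trans (ih (n+1)) ?_
            simp
          · rw [if_neg hj]
            by_cases hj2 : j + 1 ≤ n + 1
            · rw [if_pos hj2]
              have hjn : j ≤ n := by omega
              have htarget : (n + 1 + 1 - (j + 1) : ℕ) = (n - j) + 1 := by omega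
              rw [htarget]
              refine le_trans (Polynomial.degree_sub_le _ _) ?_
              refine max_le (le_trans (Polynomial.degree_add_le _ _) (max_le ?_ ?_)) ?_
              · calc (Polynomial.X * Polynomial.derivative (fmi n (j+1))).degree
                    ≤ Polynomial.X.degree + (Polynomial.derivative (fmi n (j+1))).degree :=
                      Polynomial.degree_mul_le _ _
                  _ ≤ 1 + (fmi n (j+1)).degree := by
                      gcongr
                      · exact le_of_eq Polynomial.degree_X
                      · exact Polynomial.degree_derivative_le
                  _ ≤ 1 + ((n + 1 - (j+1) : ℕ) : WithBot ℕ) := by gcongr; exact ih (j+1)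
                  _ ≤ (((n - j) + 1 : ℕ) : WithBot ℕ) := by
                      rw [← Nat.cast_one (R := WithBot ℕ), ← Nat.cast_add]
                      exact_mod_cast Nat.le_of_eq (by omega)
              · calc (Polynomial.C ((j : ℚ) + 1) * (1 - Polynomial.X) * fmi n (j+1)).degree
                    ≤ (Polynomial.C ((j : ℚ) + 1) * (1 - Polynomial.X)).degree
                        + (fmi n (j+1)).degree := Polynomial.degree_mul_le _ _
                  _ ≤ 1 + ((n + 1 - (j+1) : ℕ) : WithBot ℕ) := by
                      gcongr
                      · refine le_trans (Polynomial.degree_mul_le _ _) ?_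
                        have h1 : (Polynomial.C ((j : ℚ) + 1)).degree ≤ 0 :=
                          Polynomial.degree_C_le
                        have h2 : ((1 : Polynomial ℚ) - Polynomial.X).degree ≤ 1 := by
                          refine le_trans (Polynomial.degree_sub_le _ _) ?_
                          simp [Polynomial.degree_one, Polynomial.degree_X]
                        calc _ ≤ (0 : WithBot ℕ) + 1 := by gcongr
                          _ = 1 := by simp
                      · exact ih (j+1)
                  _ ≤ (((n - j) + 1 : ℕ) : WithBot ℕ) := by
                      rw [← Nat.cast_one (R := WithBot ℕ), ← Nat.cast_add]
                      exact_mod_cast Nat.le_of_eq (by omega)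
              · calc (Polynomial.C (j : ℚ) * fmi n j).degree
                    ≤ (Polynomial.C (j : ℚ)).degree + (fmi n j).degree :=
                      Polynomial.degree_mul_le _ _
                  _ ≤ 0 + ((n + 1 - j : ℕ) : WithBot ℕ) := by
                      gcongr
                      · exact Polynomial.degree_C_le
                      · exact ih j
                  _ ≤ (((n - j) + 1 : ℕ) : WithBot ℕ) := by
                      rw [zero_add]
                      exact_mod_cast Nat.le_of_eq (by omega)
            · rw [if_neg hj2]
              simp

lemma gmi_deg (m : ℕ) : ∀ i : ℕ, 1 ≤ i → i ≤ m + 1 → (gmi m i).degree ≤ (m + 1 - i : ℕ) := by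
  induction m using Nat.strong_induction_on with
  | _ m IH =>
      intro i hi him
      rw [gmi]
      by_cases h1 : i = m + 1
      · rw [if_pos h1]
        subst h1
        simpa using Polynomial.degree_C_le
      · rw [if_neg h1, dif_pos ⟨hi, by omega⟩]
        refine le_trans (Polynomial.degree_mul_le _ _) ?_
        calc (Polynomial.C ((-1:ℚ)^(m+1)/m.factorial)).degree
              + (∑ j ∈ (Finset.Icc i m).attach, fmi m j.1 * gmi (j.1 - 1) i).degree
            ≤ 0 + ((m + 1 - i : ℕ) : WithBot ℕ) := by
              gcongr
              · exact Polynomial.degree_C_le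
              · refine le_trans (Polynomial.degree_sum_le _ _) ?_
                refine Finset.sup_le ?_
                intro j _
                have hj := Finset.mem_Icc.mp j.2
                refine le_trans (Polynomial.degree_mul_le _ _) ?_
                have hg : (gmi (j.1 - 1) i).degree ≤ ((j.1 - 1) + 1 - i : ℕ) :=
                  IH (j.1 - 1) (by omega) i hi (by omega)
                calc (fmi m j.1).degree + (gmi (j.1 - 1) i).degree
                    ≤ ((m + 1 - j.1 : ℕ) : WithBot ℕ) + (((j.1 - 1) + 1 - i : ℕ) : WithBot ℕ) :=
                      add_le_add (fmi_deg m j.1) hg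
                  _ = (((m + 1 - j.1) + ((j.1 - 1) + 1 - i) : ℕ) : WithBot ℕ) := by
                      rw [← Nat.cast_add]
                  _ ≤ ((m + 1 - i : ℕ) : WithBot ℕ) :=
                      Nat.cast_le.mpr (by omega)
          _ = ((m + 1 - i : ℕ) : WithBot ℕ) := by rw [zero_add]

lemma sum_inv (i l : ℕ) (hl : 1 ≤ l) (hli : l ≤ i) :
    (∑ j ∈ Finset.Icc l i, fmi (i - 1) j * gmi (j - 1) l)
      = if i = l then 1 else 0 := by
  rcases eq_or_lt_of_le hli with rfl | hlt
  · rw [if_pos rfl, Finset.Icc_self, Finset.sum_singleton]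
    obtain ⟨k, rfl⟩ : ∃ k, l = k + 1 := ⟨l - 1, by omega⟩
    rw [Nat.add_sub_cancel, fmi_top, gmi, if_pos rfl, ← Polynomial.C_mul, ← Polynomial.C_1]
    congr 1
    have hk : ((k.factorial : ℚ)) ≠ 0 := by exact_mod_cast k.factorial_ne_zero
    field_simp
    have h2 : ((-1 : ℚ) ^ k) * ((-1 : ℚ) ^ k) = 1 := by
      rw [← pow_add, ← two_mul, pow_mul, neg_one_sq, one_pow]
    linear_combination h2
  · obtain ⟨m, rfl⟩ : ∃ m, i = m + 1 := ⟨i - 1, by omega⟩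
    have hlm : l ≤ m := by omega
    rw [if_neg (by omega), Finset.sum_Icc_succ_top (by omega : l ≤ m + 1)]
    simp only [Nat.add_sub_cancel]
    have hg : gmi m l = Polynomial.C ((-1 : ℚ) ^ (m + 1) / m.factorial) *
        ∑ j ∈ Finset.Icc l m, fmi m j * gmi (j - 1) l := by
      rw [gmi, if_neg (by omega), dif_pos ⟨hl, hlm⟩]
      congr 1
      exact Finset.sum_attach (Finset.Icc l m) (fun j => fmi m j * gmi (j - 1) l)
    rw [hg, fmi_top, ← mul_assoc, ← Polynomial.C_mul]
    have hfac : ((m.factorial : ℚ)) ≠ 0 := by exact_mod_cast m.factorial_ne_zero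
    have hc : ((-1 : ℚ) ^ m * m.factorial) * ((-1 : ℚ) ^ (m + 1) / m.factorial) = -1 := by
      field_simp
      have h2 : ((-1 : ℚ) ^ m) * ((-1 : ℚ) ^ (m + 1)) = -1 := by
        rw [← pow_add, show m + (m + 1) = 2 * m + 1 by ring, pow_succ, pow_mul, neg_one_sq,
          one_pow, one_mul]
      linear_combination h2
    rw [hc]
    simp

theorem gmi_degree_and_inverse (m i l : ℕ) (hl : 1 ≤ l) (hli : l ≤ i) (him : i ≤ m + 1) :
    (gmi m i).degree ≤ (m + 1 - i : ℕ) ∧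
    (∑ j ∈ Finset.Icc l i, fmi (i - 1) j * gmi (j - 1) l)
      = if i = l then 1 else 0 := by
  exact ⟨gmi_deg m i (le_trans hl hli) him, sum_inv i l hl hli⟩
end

section
/- For any positive integer k and any nonnegative integers p_1, p_2: ∑_{i=1}^{k−1} i^{p_1}·(k−i)^{p_2} = ∑ (−1)^{j+p_1}·C(i+j, i)·C(p_2, i+j−p_1)·(B_i/(j+1))·(k−1)^{j+1}·k^{p_1+p_2−i−j}, where the sum on the right runs over all pairs of nonnegative integers (i, j) with p_1 ≤ i + j ≤ p_1 + p_2, C(a,b) denotes the binomial coefficient, and B_i the Bernoulli numbers (B_1 = −1/2). In particular, the right-hand side, viewed as a polynomial in k with rational coefficients, has degree p_1 + p_2 + 1, with leading coefficient p_1!·p_2!/(p_1+p_2+1)!. -/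
open Polynomial Finset

private lemma beta_sum : ∀ p₂ p₁ : ℕ,
    ∑ s ∈ range (p₂ + 1), (-1 : ℚ) ^ s * (p₂.choose s) / (p₁ + s + 1)
      = (p₁.factorial * p₂.factorial : ℚ) / (p₁ + p₂ + 1).factorial := by
  have T : ℕ → ℕ → ℕ → ℚ := fun q p s => (-1 : ℚ) ^ s * (q.choose s) / (p + s + 1)
  intro p₂
  induction p₂ with
  | zero =>
    intro p₁
    have hz : ((p₁:ℚ) + 1) ≠ 0 := by positivity
    simp [Nat.factorial_succ]
    field_simp
  | succ n ih =>
    intro p₁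
    set T : ℕ → ℕ → ℕ → ℚ := fun q p s => (-1 : ℚ) ^ s * (q.choose s) / (p + s + 1) with hT
    have key : ∑ s ∈ range (n + 2), T (n+1) p₁ s
        = (∑ s ∈ range (n + 1), T n p₁ s) - ∑ s ∈ range (n + 1), T n (p₁+1) s := by
      have step : ∀ s, T (n+1) p₁ (s+1) = -(T n (p₁+1) s) + T n p₁ (s+1) := by
        intro s
        simp only [hT, Nat.choose_succ_succ]
        push_cast
        ring
      have h1 : ∑ s ∈ range (n + 2), T (n+1) p₁ s
          = ∑ s ∈ range (n+1), T (n+1) p₁ (s+1) + T (n+1) p₁ 0 :=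
        sum_range_succ' _ _
      have h2 : ∑ s ∈ range (n+1), T n p₁ (s+1)
          = ∑ s ∈ range n, T n p₁ (s+1) := by
        rw [sum_range_succ]
        simp [hT]
      have h3 : ∑ s ∈ range (n + 1), T n p₁ s
          = ∑ s ∈ range n, T n p₁ (s+1) + T n p₁ 0 := sum_range_succ' _ _
      have h4 : T (n+1) p₁ 0 = T n p₁ 0 := by simp [hT]
      rw [h1, sum_congr rfl (fun s _ => step s), sum_add_distrib, h2, h4]
      rw [sum_neg_distrib]
      rw [h3]
      ring
    have goal2 : ∑ s ∈ range (n + 2), T (n+1) p₁ s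
        = (p₁.factorial * (n+1).factorial : ℚ) / (p₁ + (n+1) + 1).factorial := by
      rw [key, ih p₁]
      have ih2 := ih (p₁ + 1)
      have ecast : ∑ s ∈ range (n + 1), T n (p₁+1) s
          = ∑ s ∈ range (n+1), (-1:ℚ)^s * (n.choose s) / (((p₁+1:ℕ):ℚ) + s + 1) := by
        apply sum_congr rfl
        intro s _
        simp only [hT]
      rw [ecast, ih2]
      have h1 : p₁ + 1 + n + 1 = (p₁ + n + 1) + 1 := by omega
      have h2 : p₁ + (n + 1) + 1 = (p₁ + n + 1) + 1 := by omega
      rw [h1, h2, Nat.factorial_succ (p₁ + n + 1), Nat.factorial_succ n, Nat.factorial_succ p₁]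
      have hz : ((p₁ + n + 1).factorial : ℚ) ≠ 0 := by exact_mod_cast Nat.factorial_ne_zero _
      have hz2 : ((p₁ + n + 1 + 1 : ℕ) : ℚ) ≠ 0 := by positivity
      push_cast
      field_simp
      ring
    exact goal2

private lemma neg_one_pow_eq_of_even_add {a b : ℕ} (h : Even (a + b)) :
    ((-1 : ℚ)) ^ a = (-1) ^ b := by
  obtain ⟨r, hr⟩ := h
  rcases Nat.even_or_odd a with ha | ha
  · have hb : Even b := by
      obtain ⟨u, hu⟩ := ha
      exact ⟨r - u, by omega⟩
    rw [ha.neg_one_pow, hb.neg_one_pow]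
  · have hb : Odd b := by
      obtain ⟨u, hu⟩ := ha
      exact ⟨r - u - 1, by omega⟩
    rw [ha.neg_one_pow, hb.neg_one_pow]

private lemma monic_aux (a b : ℕ) : ((X - 1 : ℚ[X]) ^ a * X ^ b).Monic := by
  have h : (X - 1 : ℚ[X]) = X - C 1 := by simp
  rw [h]
  exact ((monic_X_sub_C (1:ℚ)).pow a).mul (monic_X_pow b)

private lemma natdeg_aux (a b : ℕ) : ((X - 1 : ℚ[X]) ^ a * X ^ b).natDegree = a + b := by
  have h : (X - 1 : ℚ[X]) = X - C 1 := by simp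
  rw [h, Monic.natDegree_mul ((monic_X_sub_C (1:ℚ)).pow a) (monic_X_pow b),
    natDegree_pow, natDegree_X_sub_C, natDegree_X_pow, mul_one]

private lemma coeff_term_eq (c : ℚ) (a b n : ℕ) (h : a + b = n) :
    (C c * (X - 1 : ℚ[X]) ^ a * X ^ b).coeff n = c := by
  rw [mul_assoc, coeff_C_mul, ← h, ← natdeg_aux a b, Monic.coeff_natDegree (monic_aux a b),
    mul_one]

private lemma natdeg_pow_sub_one (a : ℕ) : ((X - 1 : ℚ[X]) ^ a).natDegree = a := by
  rw [show (X - 1 : ℚ[X]) = X - C 1 by simp, natDegree_pow, natDegree_X_sub_C, mul_one]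

private lemma natDegree_term_le (c : ℚ) (a b : ℕ) :
    (C c * (X - 1 : ℚ[X]) ^ a * X ^ b).natDegree ≤ a + b := by
  have h1 : (C c * (X - 1 : ℚ[X]) ^ a).natDegree ≤ a :=
    natDegree_mul_le.trans (by rw [natDegree_C, natdeg_pow_sub_one, zero_add])
  have h2 : ((X : ℚ[X]) ^ b).natDegree ≤ b := le_of_eq (natDegree_X_pow b)
  exact natDegree_mul_le.trans (add_le_add h1 h2)

private lemma coeff_term_zero (c : ℚ) (a b n : ℕ) (h : a + b < n) :
    (C c * (X - 1 : ℚ[X]) ^ a * X ^ b).coeff n = 0 :=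
  coeff_eq_zero_of_natDegree_lt (lt_of_le_of_lt (natDegree_term_le c a b) h)

private lemma sub_pow' (x y : ℚ) (n : ℕ) :
    (x - y) ^ n = ∑ s ∈ range (n + 1), (-1 : ℚ) ^ s * (n.choose s) * x ^ (n - s) * y ^ s := by
  rw [sub_pow, ← sum_range_reflect]
  apply sum_congr rfl
  intro m hm
  rw [mem_range] at hm
  have hm' : m ≤ n := Nat.lt_succ_iff.mp hm
  have h1 : n + 1 - 1 - m = n - m := by omega
  have h2 : n - (n - m) = m := by omega
  have h3 : n.choose (n - m) = n.choose m := Nat.choose_symm hm'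
  rw [h1, h2, h3]
  have hsign : ((-1 : ℚ)) ^ (n - m + n) = (-1) ^ m :=
    neg_one_pow_eq_of_even_add ⟨n, by omega⟩
  rw [hsign]
  ring

/-- The right-hand side of the power-sum identity, as a polynomial in `k`. -/
noncomputable def rhsPoly (p₁ p₂ : ℕ) : Polynomial ℚ :=
  ∑ ij ∈ (Finset.range (p₁ + p₂ + 1) ×ˢ Finset.range (p₁ + p₂ + 1)).filter
      (fun ij => p₁ ≤ ij.1 + ij.2 ∧ ij.1 + ij.2 ≤ p₁ + p₂),
    Polynomial.C ((-1 : ℚ) ^ (ij.2 + p₁) * (ij.1 + ij.2).choose ij.1 *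
        (p₂.choose (ij.1 + ij.2 - p₁)) * _root_.bernoulli ij.1 / (ij.2 + 1)) *
      (Polynomial.X - 1) ^ (ij.2 + 1) * Polynomial.X ^ (p₁ + p₂ - ij.1 - ij.2)

/-- Reindexed form of `rhsPoly`. -/
noncomputable def rhsPoly' (p₁ p₂ : ℕ) : Polynomial ℚ :=
  ∑ s ∈ range (p₂ + 1), ∑ t ∈ range (p₁ + s + 1),
    C ((-1 : ℚ) ^ (s + t) * ((p₁ + s).choose t) * (p₂.choose s) * _root_.bernoulli t
        / ((p₁ + s + 1 - t : ℕ) : ℚ)) *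
      (X - 1) ^ (p₁ + s + 1 - t) * X ^ (p₂ - s)

private lemma rhsPoly_eq (p₁ p₂ : ℕ) : rhsPoly p₁ p₂ = rhsPoly' p₁ p₂ := by
  rw [rhsPoly, rhsPoly']
  refine Eq.trans ?_ (sum_sigma (range (p₂ + 1)) (fun s => range (p₁ + s + 1))
    (fun x => C ((-1 : ℚ) ^ (x.1 + x.2) * ((p₁ + x.1).choose x.2) * (p₂.choose x.1) *
        _root_.bernoulli x.2 / ((p₁ + x.1 + 1 - x.2 : ℕ) : ℚ)) *
      (X - 1) ^ (p₁ + x.1 + 1 - x.2) * X ^ (p₂ - x.1)))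
  refine sum_nbij' (fun ij => (⟨ij.1 + ij.2 - p₁, ij.1⟩ : Σ _ : ℕ, ℕ))
    (fun x => (x.2, p₁ + x.1 - x.2)) ?_ ?_ ?_ ?_ ?_
  · rintro ⟨i, j⟩ ha
    simp only [mem_filter, mem_product, mem_range] at ha
    simp only [mem_sigma, mem_range]
    omega
  · rintro ⟨s, t⟩ ha
    simp only [mem_sigma, mem_range] at ha
    simp only [mem_filter, mem_product, mem_range]
    omega
  · rintro ⟨i, j⟩ ha
    simp only [mem_filter, mem_product, mem_range] at ha
    dsimp only
    simp only [Prod.mk.injEq]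
    exact ⟨trivial, by omega⟩
  · rintro ⟨s, t⟩ ha
    simp only [mem_sigma, mem_range] at ha
    dsimp only
    simp only [Sigma.mk.inj_iff, heq_eq_eq]
    exact ⟨by omega, trivial⟩
  · rintro ⟨i, j⟩ ha
    simp only [mem_filter, mem_product, mem_range] at ha
    obtain ⟨⟨hi, hj⟩, hp, hq⟩ := ha
    dsimp only
    have h2 : p₁ + (i + j - p₁) + 1 - i = j + 1 := by omega
    have h1 : p₁ + (i + j - p₁) = i + j := by omega
    have h3 : p₂ - (i + j - p₁) = p₁ + p₂ - i - j := by omega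
    rw [h2, h1, h3]
    have hsign : ((-1 : ℚ)) ^ (j + p₁) = (-1) ^ (i + j - p₁ + i) :=
      neg_one_pow_eq_of_even_add ⟨i + j, by omega⟩
    rw [hsign]
    norm_num

private lemma coeff_rhsPoly' (p₁ p₂ : ℕ) :
    (rhsPoly' p₁ p₂).coeff (p₁ + p₂ + 1)
      = (p₁.factorial * p₂.factorial : ℚ) / (p₁ + p₂ + 1).factorial := by
  rw [rhsPoly', finset_sum_coeff]
  have step : ∀ s ∈ range (p₂ + 1),
      (∑ t ∈ range (p₁ + s + 1),
        C ((-1 : ℚ) ^ (s + t) * ((p₁ + s).choose t) * (p₂.choose s) * _root_.bernoulli t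
            / ((p₁ + s + 1 - t : ℕ) : ℚ)) *
          (X - 1) ^ (p₁ + s + 1 - t) * X ^ (p₂ - s)).coeff (p₁ + p₂ + 1)
      = (-1 : ℚ) ^ s * (p₂.choose s) / (p₁ + s + 1) := by
    intro s hs
    rw [mem_range] at hs
    rw [finset_sum_coeff]
    rw [Finset.sum_eq_single_of_mem 0 (mem_range.mpr (by omega))]
    · rw [coeff_term_eq _ _ _ _ (by omega)]
      simp only [add_zero, pow_zero, Nat.choose_zero_right, Nat.cast_one, mul_one,
        _root_.bernoulli_zero, Nat.sub_zero]
      push_cast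
      ring
    · intro t ht hne
      rw [mem_range] at ht
      exact coeff_term_zero _ _ _ _ (by omega)
  rw [sum_congr rfl step]
  exact beta_sum p₂ p₁

private lemma natDegree_rhsPoly'_le (p₁ p₂ : ℕ) :
    (rhsPoly' p₁ p₂).natDegree ≤ p₁ + p₂ + 1 := by
  rw [rhsPoly']
  refine natDegree_sum_le_of_forall_le _ _ fun s hs => ?_
  rw [mem_range] at hs
  refine natDegree_sum_le_of_forall_le _ _ fun t ht => ?_
  rw [mem_range] at ht
  exact (natDegree_term_le _ _ _).trans (by omega)

private lemma scalar_id (p₁ s t : ℕ) (ht : t ≤ p₁ + s) :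
    _root_.bernoulli' t * ((p₁ + s + 1).choose t) / ((p₁ : ℚ) + s + 1)
      = (-1 : ℚ) ^ t * ((p₁ + s).choose t) * _root_.bernoulli t
          / ((p₁ + s + 1 - t : ℕ) : ℚ) := by
  have hb : (-1 : ℚ) ^ t * _root_.bernoulli t = _root_.bernoulli' t := by
    rw [_root_.bernoulli, ← mul_assoc, ← pow_add, show t + t = 2 * t by omega, pow_mul]
    norm_num
  have hd1 : ((p₁ : ℚ) + s + 1) ≠ 0 := by positivity
  have hd2 : ((p₁ + s + 1 - t : ℕ) : ℚ) ≠ 0 := Nat.cast_ne_zero.mpr (by omega)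
  have hch : (((p₁ + s).choose t : ℚ)) * ((p₁ : ℚ) + s + 1)
      = (((p₁ + s + 1).choose t : ℚ)) * ((p₁ + s + 1 - t : ℕ) : ℚ) := by
    have := Nat.choose_mul_succ_eq (p₁ + s) t
    have h2 : ((p₁ + s).choose t * (p₁ + s + 1) : ℕ)
        = ((p₁ + s + 1).choose t * (p₁ + s + 1 - t) : ℕ) := this
    exact_mod_cast h2
  rw [div_eq_div_iff hd1 hd2]
  linear_combination (_root_.bernoulli' t) * hch.symm
    - (((p₁ + s).choose t : ℚ) * ((p₁ : ℚ) + s + 1)) * hb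

private lemma eval_rhsPoly' (p₁ p₂ k : ℕ) (hk : 1 ≤ k) :
    ∑ i ∈ Finset.Ico 1 k, (i : ℚ) ^ p₁ * ((k - i : ℕ) : ℚ) ^ p₂
      = (rhsPoly' p₁ p₂).eval (k : ℚ) := by
  have hnk : k - 1 + 1 = k := Nat.sub_add_cancel hk
  have hkn : ((k - 1 : ℕ) : ℚ) = (k : ℚ) - 1 := by
    push_cast [Nat.cast_sub hk]
    ring
  have expand : ∀ i ∈ Finset.Ico 1 k, (i : ℚ) ^ p₁ * ((k - i : ℕ) : ℚ) ^ p₂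
      = ∑ s ∈ range (p₂ + 1),
          ((-1 : ℚ) ^ s * (p₂.choose s) * (k : ℚ) ^ (p₂ - s)) * (i : ℚ) ^ (p₁ + s) := by
    intro i hi
    rw [mem_Ico] at hi
    rw [Nat.cast_sub (le_of_lt hi.2), sub_pow' (k : ℚ) i p₂, mul_sum]
    refine sum_congr rfl fun s _ => ?_
    rw [pow_add]
    ring
  rw [sum_congr rfl expand, sum_comm]
  have inner : ∀ s ∈ range (p₂ + 1),
      ∑ i ∈ Finset.Ico 1 k,
          ((-1 : ℚ) ^ s * (p₂.choose s) * (k : ℚ) ^ (p₂ - s)) * (i : ℚ) ^ (p₁ + s)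
        = ∑ t ∈ range (p₁ + s + 1),
            (((-1 : ℚ) ^ (s + t) * ((p₁ + s).choose t) * (p₂.choose s) * _root_.bernoulli t
                / ((p₁ + s + 1 - t : ℕ) : ℚ)) * ((k : ℚ) - 1) ^ (p₁ + s + 1 - t)
              * (k : ℚ) ^ (p₂ - s)) := by
    intro s _
    rw [← mul_sum]
    have hfaul : ∑ i ∈ Finset.Ico 1 k, (i : ℚ) ^ (p₁ + s)
        = ∑ t ∈ range (p₁ + s + 1), _root_.bernoulli' t * ((p₁ + s + 1).choose t)
            * ((k - 1 : ℕ) : ℚ) ^ (p₁ + s + 1 - t) / ((p₁ : ℚ) + s + 1) := by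
      have := sum_Ico_pow (k - 1) (p₁ + s)
      rw [hnk] at this
      rw [this]
      refine sum_congr rfl fun t _ => ?_
      push_cast
      ring
    rw [hfaul, mul_sum]
    refine sum_congr rfl fun t ht => ?_
    rw [mem_range] at ht
    have ht' : t ≤ p₁ + s := by omega
    have hs := scalar_id p₁ s t ht'
    rw [hkn]
    have : _root_.bernoulli' t * ((p₁ + s + 1).choose t : ℚ)
          * ((k : ℚ) - 1) ^ (p₁ + s + 1 - t) / ((p₁ : ℚ) + s + 1)
        = (_root_.bernoulli' t * ((p₁ + s + 1).choose t) / ((p₁ : ℚ) + s + 1))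
          * ((k : ℚ) - 1) ^ (p₁ + s + 1 - t) := by ring
    rw [this, hs]
    ring
  rw [sum_congr rfl inner]
  rw [rhsPoly', eval_finset_sum]
  refine sum_congr rfl fun s _ => ?_
  rw [eval_finset_sum]
  refine sum_congr rfl fun t _ => ?_
  simp [eval_mul, eval_pow, eval_C, eval_sub, eval_X, eval_one]

theorem power_sum_two (p₁ p₂ : ℕ) :
    (∀ k : ℕ, 1 ≤ k →
      ∑ i ∈ Finset.Ico 1 k, (i : ℚ) ^ p₁ * ((k - i : ℕ) : ℚ) ^ p₂
        = (rhsPoly p₁ p₂).eval (k : ℚ)) ∧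
    (rhsPoly p₁ p₂).degree = (p₁ + p₂ + 1 : ℕ) ∧
    (rhsPoly p₁ p₂).leadingCoeff
      = (p₁.factorial * p₂.factorial : ℚ) / (p₁ + p₂ + 1).factorial := by
  have hcoeff : (rhsPoly p₁ p₂).coeff (p₁ + p₂ + 1)
      = (p₁.factorial * p₂.factorial : ℚ) / (p₁ + p₂ + 1).factorial := by
    rw [rhsPoly_eq]; exact coeff_rhsPoly' p₁ p₂
  have hne : (rhsPoly p₁ p₂).coeff (p₁ + p₂ + 1) ≠ 0 := by
    rw [hcoeff]
    have h1 : (0 : ℚ) < p₁.factorial := by exact_mod_cast Nat.factorial_pos p₁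
    have h2 : (0 : ℚ) < p₂.factorial := by exact_mod_cast Nat.factorial_pos p₂
    have h3 : (0 : ℚ) < (p₁ + p₂ + 1).factorial := by
      exact_mod_cast Nat.factorial_pos (p₁ + p₂ + 1)
    positivity
  have hdegle : (rhsPoly p₁ p₂).degree ≤ (p₁ + p₂ + 1 : ℕ) := by
    rw [← natDegree_le_iff_degree_le, rhsPoly_eq]
    exact natDegree_rhsPoly'_le p₁ p₂
  have hdeg : (rhsPoly p₁ p₂).degree = (p₁ + p₂ + 1 : ℕ) :=
    degree_eq_of_le_of_coeff_ne_zero hdegle hne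
  have hnat : (rhsPoly p₁ p₂).natDegree = p₁ + p₂ + 1 :=
    natDegree_eq_of_degree_eq_some hdeg
  refine ⟨fun k hk => ?_, hdeg, ?_⟩
  · rw [rhsPoly_eq]
    exact eval_rhsPoly' p₁ p₂ k hk
  · rw [Polynomial.leadingCoeff, hnat, hcoeff]
end

section
/- Let n be a positive integer and let p_1, …, p_n be nonnegative integers. Then there exists a polynomial f(x) ∈ ℚ[x] of degree exactly p_1 + ⋯ + p_n + n − 1 such that for every integer k ≥ n: ∑_{k_1+⋯+k_n=k, k_j≥1} k_1^{p_1}·k_2^{p_2}⋯k_n^{p_n} = f(k), where the sum runs over all compositions (k_1,…,k_n) of k into n positive integer parts. -/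
/-- The set of compositions of `k` into `n` positive parts. -/
noncomputable def comps (n k : ℕ) : Finset (Fin n → ℕ) :=
  (Fintype.piFinset fun _ => Finset.Icc 1 k).filter (fun v => ∑ j, v j = k)

open Polynomial Finset

lemma faul (t : ℕ) : ∃ F : ℚ[X], F.natDegree ≤ t + 1 ∧
    ∀ k : ℕ, ∑ j ∈ Finset.range k, (j : ℚ) ^ t = F.eval (k : ℚ) := by
  refine ⟨∑ i ∈ range (t + 1), C (_root_.bernoulli i * ((t + 1).choose i) / (t + 1)) * X ^ (t + 1 - i),
    ?_, ?_⟩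
  · refine natDegree_sum_le_of_forall_le _ _ fun i hi => ?_
    exact (natDegree_mul_le).trans (by simp [Nat.sub_le])
  · intro k
    rw [sum_range_pow]
    simp only [eval_finset_sum, eval_mul, eval_C, eval_pow, eval_X]
    exact Finset.sum_congr rfl fun i _ => by ring

lemma sumpoly (g : ℚ[X]) : ∃ G : ℚ[X], G.natDegree ≤ g.natDegree + 1 ∧
    ∀ k : ℕ, ∑ j ∈ Finset.range k, g.eval (j : ℚ) = G.eval (k : ℚ) := by
  choose F hFd hFe using faul
  refine ⟨∑ t ∈ range (g.natDegree + 1), C (g.coeff t) * F t, ?_, ?_⟩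
  · refine natDegree_sum_le_of_forall_le _ _ fun t ht => ?_
    refine natDegree_mul_le.trans ?_
    simp only [natDegree_C, zero_add]
    exact (hFd t).trans (by simp at ht; omega)
  · intro k
    simp only [eval_finset_sum, eval_mul, eval_C]
    have : ∀ j : ℕ, g.eval (j:ℚ) = ∑ t ∈ range (g.natDegree + 1), g.coeff t * (j:ℚ)^t := by
      intro j; rw [eval_eq_sum_range]
    simp_rw [this]
    rw [Finset.sum_comm]
    exact Finset.sum_congr rfl fun t _ => by rw [← hFe t k, Finset.mul_sum]

lemma convpoly (g : ℚ[X]) (p a : ℕ) :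
    ∃ H : ℚ[X], H.natDegree ≤ g.natDegree + p + 1 ∧
      ∀ k : ℕ, a ≤ k →
        ∑ j ∈ Finset.Ico a k, ((k : ℚ) - j) ^ p * g.eval (j : ℚ) = H.eval (k : ℚ) := by
  have hex : ∀ m : ℕ, ∃ G : ℚ[X], G.natDegree ≤ g.natDegree + (p - m) + 1 ∧
      ∀ k : ℕ, ∑ j ∈ Finset.range k, (j:ℚ)^(p-m) * g.eval (j:ℚ) = G.eval (k:ℚ) := by
    intro m
    obtain ⟨G, hGd, hGe⟩ := sumpoly (X ^ (p - m) * g)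
    refine ⟨G, hGd.trans ?_, fun k => ?_⟩
    · have := natDegree_mul_le (p := (X:ℚ[X]) ^ (p-m)) (q := g)
      simp only [natDegree_X_pow] at this
      omega
    · rw [← hGe k]; exact Finset.sum_congr rfl fun j _ => by simp [mul_comm]
  choose G hGd hGe using hex
  refine ⟨∑ m ∈ range (p + 1), C ((-1:ℚ)^(m+p) * (p.choose m : ℚ)) * X^m *
      (G m - C ((G m).eval (a:ℚ))), ?_, ?_⟩
  · refine natDegree_sum_le_of_forall_le _ _ fun m hm => ?_
    refine natDegree_mul_le.trans ?_
    have h1 : (C ((-1:ℚ)^(m+p) * (p.choose m : ℚ)) * X^m).natDegree ≤ m :=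
      (natDegree_C_mul_le _ _).trans_eq (natDegree_X_pow m)
    have h2 : (G m - C ((G m).eval (a:ℚ))).natDegree ≤ g.natDegree + (p - m) + 1 :=
      (natDegree_sub_le _ _).trans (by simp [hGd m])
    simp only [mem_range] at hm
    omega
  · intro k hak
    simp only [eval_finset_sum, eval_mul, eval_C, eval_pow, eval_X, eval_sub]
    have key : ∀ j ∈ Finset.Ico a k, ((k : ℚ) - j) ^ p * g.eval (j : ℚ) =
        ∑ m ∈ range (p + 1),
          ((-1:ℚ)^(m+p) * (p.choose m : ℚ)) * (k:ℚ)^m * ((j:ℚ)^(p-m) * g.eval (j:ℚ)) := by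
      intro j _
      rw [sub_pow, Finset.sum_mul]
      exact Finset.sum_congr rfl fun m _ => by ring
    rw [Finset.sum_congr rfl key, Finset.sum_comm]
    refine Finset.sum_congr rfl fun m _ => ?_
    rw [← Finset.mul_sum]
    congr 1
    rw [Finset.sum_Ico_eq_sub _ hak, hGe m k, hGe m a]


lemma mem_comps {n k : ℕ} {v : Fin n → ℕ} :
    v ∈ comps n k ↔ (∀ j, 1 ≤ v j ∧ v j ≤ k) ∧ ∑ j, v j = k := by
  simp [comps, Fintype.mem_piFinset, Finset.mem_Icc, forall_and]

lemma comps_succ_sum (n k : ℕ) (F : (Fin (n + 1) → ℕ) → ℚ) :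
    ∑ v ∈ comps (n + 1) k, F v =
      ∑ m ∈ Finset.Icc 1 (k - n), ∑ w ∈ comps n (k - m), F (Fin.snoc w m) := by
  rw [← Finset.sum_sigma (Finset.Icc 1 (k-n)) (fun m => comps n (k - m))
      (fun x => F (Fin.snoc x.2 x.1))]
  refine Finset.sum_nbij' (fun v => ⟨v (Fin.last n), Fin.init v⟩)
    (fun x => Fin.snoc x.2 x.1) ?_ ?_ ?_ ?_ ?_
  · intro v hv
    rw [mem_comps] at hv
    obtain ⟨hmem, hsum⟩ := hv
    rw [Fin.sum_univ_castSucc] at hsum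
    have hinit_ge : n ≤ ∑ i : Fin n, v i.castSucc := by
      calc n = (Finset.univ : Finset (Fin n)).card • 1 := by simp
      _ ≤ ∑ i : Fin n, v i.castSucc := Finset.card_nsmul_le_sum _ _ _ fun i _ => (hmem _).1
    have hlast : 1 ≤ v (Fin.last n) ∧ v (Fin.last n) ≤ k := hmem _
    rw [Finset.mem_sigma, Finset.mem_Icc, mem_comps]
    dsimp only
    refine ⟨⟨hlast.1, by omega⟩, fun i => ?_, ?_⟩
    · have h1 : 1 ≤ v i.castSucc := (hmem _).1
      have h2 : v i.castSucc ≤ ∑ i : Fin n, v i.castSucc :=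
        Finset.single_le_sum (f := fun i : Fin n => v i.castSucc)
          (fun i _ => Nat.zero_le _) (Finset.mem_univ i)
      simp only [Fin.init]
      constructor <;> omega
    · simp only [Fin.init]
      omega
  · rintro ⟨m, w⟩ hx
    rw [Finset.mem_sigma, Finset.mem_Icc, mem_comps] at hx
    dsimp only at hx ⊢
    obtain ⟨⟨hm1, hm2⟩, hw, hsum⟩ := hx
    rw [mem_comps]
    constructor
    · intro j
      refine Fin.lastCases ?_ (fun i => ?_) j
      · simp only [Fin.snoc_last]; omega
      · simp only [Fin.snoc_castSucc]
        have := hw i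
        omega
    · rw [Fin.sum_univ_castSucc]
      simp only [Fin.snoc_castSucc, Fin.snoc_last, hsum]
      omega
  · intro v _; exact Fin.snoc_init_self v
  · rintro ⟨m, w⟩ _
    simp [Fin.init_snoc, Fin.snoc_last]
  · intro v _
    rw [Fin.snoc_init_self]

lemma comps_one (k : ℕ) (hk : 1 ≤ k) : comps 1 k = {fun _ => k} := by
  ext v
  simp only [mem_comps, Finset.mem_singleton]
  constructor
  · rintro ⟨_, hsum⟩
    rw [Fin.sum_univ_one] at hsum
    funext j
    rw [Subsingleton.elim j 0, hsum]
  · rintro rfl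
    exact ⟨fun j => ⟨hk, le_refl k⟩, by rw [Fin.sum_univ_one]⟩

lemma mainpoly : ∀ n : ℕ, 1 ≤ n → ∀ p : Fin n → ℕ, ∃ f : ℚ[X],
    f.natDegree ≤ (∑ j, p j) + (n - 1) ∧
    ∀ k : ℕ, n ≤ k → ∑ v ∈ comps n k, ∏ j, (v j : ℚ) ^ (p j) = f.eval (k : ℚ) := by
  intro n hn
  induction n, hn using Nat.le_induction with
  | base =>
    intro p
    refine ⟨X ^ (p 0), by simp, fun k hk => ?_⟩
    rw [comps_one k hk]
    simp [Fin.prod_univ_one, Subsingleton.elim _ (0 : Fin 1)]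
  | succ n hn IH =>
    intro p
    obtain ⟨g, hgd, hge⟩ := IH (fun i => p i.castSucc)
    obtain ⟨H, hHd, hHe⟩ := convpoly g (p (Fin.last n)) n
    refine ⟨H, ?_, ?_⟩
    · calc H.natDegree ≤ g.natDegree + p (Fin.last n) + 1 := hHd
      _ ≤ (∑ i : Fin n, p i.castSucc) + (n - 1) + p (Fin.last n) + 1 := by omega
      _ ≤ (∑ j : Fin (n+1), p j) + (n + 1 - 1) := by
          rw [Fin.sum_univ_castSucc]; omega
    · intro k hk
      rw [comps_succ_sum n k (fun v => ∏ j, (v j : ℚ) ^ (p j))]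
      have step1 : ∀ m ∈ Finset.Icc 1 (k - n),
          (∑ w ∈ comps n (k - m), ∏ j : Fin (n+1), ((Fin.snoc w m : Fin (n+1) → ℕ) j : ℚ) ^ (p j))
          = (m : ℚ) ^ (p (Fin.last n)) * g.eval ((k - m : ℕ) : ℚ) := by
        intro m hm
        rw [Finset.mem_Icc] at hm
        have hkm : n ≤ k - m := by omega
        rw [← hge (k - m) hkm, Finset.mul_sum]
        refine Finset.sum_congr rfl fun w _ => ?_
        rw [Fin.prod_univ_castSucc]
        simp only [Fin.snoc_castSucc, Fin.snoc_last]
        ring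
      rw [Finset.sum_congr rfl step1]
      rw [← hHe k (by omega)]
      refine Finset.sum_nbij' (fun m => k - m) (fun j => k - j) ?_ ?_ ?_ ?_ ?_
      · intro m hm
        rw [Finset.mem_Icc] at hm
        rw [Finset.mem_Ico]
        omega
      · intro j hj
        rw [Finset.mem_Ico] at hj
        rw [Finset.mem_Icc]
        omega
      · intro m hm; rw [Finset.mem_Icc] at hm; omega
      · intro j hj; rw [Finset.mem_Ico] at hj; omega
      · intro m hm
        rw [Finset.mem_Icc] at hm
        have h1 : k - (k - m) = m := by omega
        have h2 : ((k - m : ℕ) : ℚ) = (k : ℚ) - (m : ℚ) := by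
          rw [Nat.cast_sub (by omega)]
        rw [h2, sub_sub_cancel]

lemma lowerbound (m : ℕ) (p : Fin (m+1) → ℕ) (k : ℕ) (hk : 4 * (m+1) ≤ k) :
    ((k / (2*(m+1)) : ℕ) : ℚ) ^ ((∑ j, p j) + m) ≤
      ∑ v ∈ comps (m+1) k, ∏ j, (v j : ℚ) ^ (p j) := by
  set q := k / (2*(m+1)) with hq
  have hq2 : 2 ≤ q := by
    rw [hq, Nat.le_div_iff_mul_le (by omega)]
    omega
  have h2nq : 2*(m+1)*q ≤ k := by
    rw [hq, mul_comm]
    exact Nat.div_mul_le_self k _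
  set A := Fintype.piFinset fun _ : Fin m => Finset.Icc q (2*q-1) with hA
  set ι := fun w : Fin m → ℕ => (Fin.snoc w (k - ∑ i, w i) : Fin (m+1) → ℕ) with hι
  have key : m * (2*q-1) + 2*q ≤ 2*(m+1)*q := by
    calc m * (2*q-1) + 2*q ≤ m * (2*q) + 2*q :=
          Nat.add_le_add_right (Nat.mul_le_mul_left m (by omega)) _
    _ = 2*(m+1)*q := by ring
  have hsumw : ∀ w ∈ A, ∑ i, w i ≤ m * (2*q-1) := by
    intro w hw
    rw [hA, Fintype.mem_piFinset] at hw
    calc ∑ i, w i ≤ ∑ _i : Fin m, (2*q-1) :=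
      Finset.sum_le_sum fun i _ => (Finset.mem_Icc.mp (hw i)).2
    _ = m * (2*q-1) := by simp [Finset.sum_const, mul_comm]
  have hlast_ge : ∀ w ∈ A, 2*q ≤ k - ∑ i, w i := by
    intro w hw
    have := hsumw w hw
    omega
  have hcoord : ∀ w ∈ A, ∀ j, q ≤ ι w j ∧ ι w j ≤ k := by
    intro w hw j
    have hge := hlast_ge w hw
    have hsum := hsumw w hw
    refine Fin.lastCases ?_ (fun i => ?_) j
    · rw [hι]; simp only [Fin.snoc_last]; omega
    · rw [hι]; simp only [Fin.snoc_castSucc]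
      rw [hA, Fintype.mem_piFinset] at hw
      have := Finset.mem_Icc.mp (hw i)
      omega
  have himg : ∀ w ∈ A, ι w ∈ comps (m+1) k := by
    intro w hw
    rw [mem_comps]
    refine ⟨fun j => ⟨by have := (hcoord w hw j).1; omega, (hcoord w hw j).2⟩, ?_⟩
    rw [hι]
    simp only
    rw [Fin.sum_univ_castSucc]
    simp only [Fin.snoc_castSucc, Fin.snoc_last]
    have := hlast_ge w hw
    omega
  have hinj : Set.InjOn ι A := by
    intro w1 _ w2 _ h
    have : Fin.init (ι w1) = Fin.init (ι w2) := by rw [h]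
    rwa [hι, Fin.init_snoc, Fin.init_snoc] at this
  have hcard : (A.image ι).card = q ^ m := by
    rw [Finset.card_image_of_injOn hinj, hA, Fintype.card_piFinset]
    simp only [Nat.card_Icc]
    have : 2*q - 1 + 1 - q = q := by omega
    rw [this, Finset.prod_const, Finset.card_univ, Fintype.card_fin]
  have hterm : ∀ v ∈ A.image ι, (q:ℚ) ^ (∑ j, p j) ≤ ∏ j, (v j : ℚ) ^ (p j) := by
    intro v hv
    obtain ⟨w, hw, rfl⟩ := Finset.mem_image.mp hv
    calc (q:ℚ) ^ (∑ j, p j) = ∏ j, (q:ℚ) ^ (p j) := by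
          rw [Finset.prod_pow_eq_pow_sum]
    _ ≤ ∏ j, (ι w j : ℚ) ^ (p j) := by
        refine Finset.prod_le_prod (fun j _ => by positivity) (fun j _ => ?_)
        exact pow_le_pow_left₀ (by positivity) (by exact_mod_cast (hcoord w hw j).1) _
  calc ((q:ℕ):ℚ) ^ ((∑ j, p j) + m) = (q^m : ℕ) • (q:ℚ) ^ (∑ j, p j) := by
        push_cast [nsmul_eq_mul]
        ring
  _ ≤ ∑ v ∈ A.image ι, ∏ j, (v j : ℚ) ^ (p j) := by
      rw [← hcard]
      exact Finset.card_nsmul_le_sum _ _ _ hterm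
  _ ≤ ∑ v ∈ comps (m+1) k, ∏ j, (v j : ℚ) ^ (p j) := by
      refine Finset.sum_le_sum_of_subset_of_nonneg ?_ (fun v _ _ => by positivity)
      intro v hv
      obtain ⟨w, hw, rfl⟩ := Finset.mem_image.mp hv
      exact himg w hw

theorem power_sum_compositions (n : ℕ) (hn : 1 ≤ n) (p : Fin n → ℕ) :
    ∃ f : Polynomial ℚ,
      f.degree = ((∑ j, p j) + n - 1 : ℕ) ∧
      ∀ k : ℕ, n ≤ k →
        ∑ v ∈ comps n k, ∏ j, (v j : ℚ) ^ (p j) = f.eval (k : ℚ) := by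
  obtain ⟨m, rfl⟩ : ∃ m, n = m + 1 := ⟨n - 1, by omega⟩
  obtain ⟨f, hfd, hfe⟩ := mainpoly (m+1) (by omega) p
  set D := (∑ j, p j) + m with hD
  have hDeq : (∑ j, p j) + (m + 1) - 1 = D := by omega
  rw [hDeq]
  replace hfd : f.natDegree ≤ D := by omega
  set c : ℚ := ((4*(m+1) : ℕ) : ℚ) ^ D with hc
  have hcpos : 0 < c := by positivity
  -- key growth bound
  have hkey : ∀ k : ℕ, 4*(m+1) ≤ k → (k:ℚ)^D ≤ c * f.eval (k:ℚ) := by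
    intro k hk
    set q := k / (2*(m+1)) with hq
    have hq1 : 1 ≤ q := by
      rw [hq, Nat.le_div_iff_mul_le (by omega)]; omega
    have hA : 2*(m+1)*q ≤ k := by rw [hq, mul_comm]; exact Nat.div_mul_le_self k _
    have hB : k < 2*(m+1)*q + 2*(m+1) := by
      have h1 := Nat.div_add_mod k (2*(m+1))
      have h2 : k % (2*(m+1)) < 2*(m+1) := Nat.mod_lt _ (by omega)
      rw [hq]; omega
    have hC : k ≤ 4*(m+1)*q := by
      have e : 4*(m+1)*q = 2*(m+1)*q + 2*(m+1)*q := by ring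
      have h3 : 2*(m+1)*1 ≤ 2*(m+1)*q := Nat.mul_le_mul_left _ hq1
      omega
    have hlow : ((q:ℕ):ℚ)^D ≤ f.eval (k:ℚ) := by
      rw [← hfe k (by omega)]
      exact lowerbound m p k hk
    calc (k:ℚ)^D ≤ ((4*(m+1)*q : ℕ):ℚ)^D := by
          refine pow_le_pow_left₀ (by positivity) ?_ _
          exact_mod_cast hC
    _ = c * ((q:ℕ):ℚ)^D := by rw [hc, Nat.cast_mul, mul_pow]
    _ ≤ c * f.eval (k:ℚ) := by
        exact mul_le_mul_of_nonneg_left hlow hcpos.le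
  have hfne : f ≠ 0 := by
    intro h0
    have h1 := hkey (4*(m+1)) le_rfl
    rw [h0, eval_zero, mul_zero] at h1
    have h2 : (0:ℚ) < ((4*(m+1) : ℕ):ℚ)^D :=
      pow_pos (by exact_mod_cast Nat.succ_le_iff.mp (by omega : 1 ≤ 4*(m+1))) _
    exact absurd h1 (not_le.mpr h2)
  have hnd : f.natDegree = D := by
    refine le_antisymm hfd ?_
    by_contra hlt
    push_neg at hlt
    have hD1 : 1 ≤ D := by omega
    set Q : ℚ[X] := X^D - C c * f with hQ
    have hdegf : (C c * f).degree < (X^D : ℚ[X]).degree := by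
      rw [degree_X_pow, degree_C_mul hcpos.ne', degree_eq_natDegree hfne]
      exact_mod_cast hlt
    have hQdeg : Q.degree = D := by
      rw [hQ, degree_sub_eq_left_of_degree_lt hdegf, degree_X_pow]
    have hQlead : Q.leadingCoeff = 1 := by
      rw [leadingCoeff, natDegree_eq_of_degree_eq_some hQdeg, hQ]
      rw [coeff_sub, coeff_X_pow, if_pos rfl, coeff_C_mul,
        coeff_eq_zero_of_natDegree_lt hlt]
      ring
    have htend : Filter.Tendsto (fun x : ℚ => Q.eval x) Filter.atTop Filter.atTop :=
      Polynomial.tendsto_atTop_of_leadingCoeff_nonneg Q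
        (by rw [hQdeg]; exact_mod_cast hD1) (by rw [hQlead]; norm_num)
    have htend2 : Filter.Tendsto (fun k : ℕ => Q.eval (k:ℚ)) Filter.atTop Filter.atTop :=
      htend.comp tendsto_natCast_atTop_atTop
    obtain ⟨k, hk1, hk2⟩ :=
      ((Filter.eventually_ge_atTop (4*(m+1))).and (htend2.eventually_ge_atTop 1)).exists
    have := hkey k hk1
    rw [hQ] at hk2
    simp only [eval_sub, eval_pow, eval_X, eval_mul, eval_C] at hk2
    linarith
  refine ⟨f, ?_, fun k hk => hfe k hk⟩
  rw [degree_eq_natDegree hfne, hnd]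
end
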